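/- arXiv:1906.05722 — 2 statements merged into one kernel-verified Lean document; each statement's English description precedes it below -/
import Mathlib

section
/- Fix a nonzero frequency k ∈ ℝᵈ and a complex symmetric d×d matrix B. Then min over a ∈ ℂᵈ of ‖ i π (a⊗k + k⊗a) − B ‖² (Frobenius norm squared, with the minimization over all a) equals ‖B‖² − 2|Bk|²/|k|² + |k·Bk|²/|k|⁴. -/
open Complex Matrix Finset

private lemma quadpoly (d : ℕ) (k v u β γ : Fin d → ℂ) :
    2 * (∑ i, k i ^ 2) *
        (∑ i, (2 * (∑ i, k i ^ 2) ^ 2 * v i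
            - (2 * (∑ i, k i ^ 2) * β i - (∑ i, k i * β i) * k i))
          * (2 * (∑ i, k i ^ 2) ^ 2 * u i
            - (2 * (∑ i, k i ^ 2) * γ i - (∑ i, k i * γ i) * k i)))
      + 2 * ((∑ i, (2 * (∑ i, k i ^ 2) ^ 2 * v i
            - (2 * (∑ i, k i ^ 2) * β i - (∑ i, k i * β i) * k i)) * k i)
          * (∑ i, (2 * (∑ i, k i ^ 2) ^ 2 * u i
            - (2 * (∑ i, k i ^ 2) * γ i - (∑ i, k i * γ i) * k i)) * k i))
    = 4 * (∑ i, k i ^ 2) ^ 4 *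
        (2 * (∑ i, k i ^ 2) * (∑ i, v i * u i)
          + 2 * ((∑ i, v i * k i) * (∑ i, u i * k i))
          - 2 * (∑ i, v i * γ i) - 2 * (∑ i, u i * β i))
      + 8 * (∑ i, k i ^ 2) ^ 3 * (∑ i, β i * γ i)
      - 4 * (∑ i, k i ^ 2) ^ 2 * ((∑ i, k i * β i) * (∑ i, k i * γ i)) := by
  set K := ∑ i, k i ^ 2 with hKdef
  set κ := ∑ i, k i * β i with hκ
  set κ' := ∑ i, k i * γ i with hκ'
  have e1 : ∀ i, (2 * K ^ 2 * v i - (2 * K * β i - κ * k i))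
      * (2 * K ^ 2 * u i - (2 * K * γ i - κ' * k i))
      = 4 * K ^ 4 * (v i * u i) - 4 * K ^ 3 * (v i * γ i)
        + 2 * K ^ 2 * κ' * (v i * k i) - 4 * K ^ 3 * (u i * β i)
        + 2 * K ^ 2 * κ * (u i * k i) + 4 * K ^ 2 * (β i * γ i)
        - 2 * K * κ' * (k i * β i) - 2 * K * κ * (k i * γ i)
        + κ * κ' * (k i ^ 2) := by
    intro i; ring
  have e2 : ∀ i, (2 * K ^ 2 * v i - (2 * K * β i - κ * k i)) * k i
      = 2 * K ^ 2 * (v i * k i) - 2 * K * (k i * β i) + κ * (k i ^ 2) := by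
    intro i; ring
  have e3 : ∀ i, (2 * K ^ 2 * u i - (2 * K * γ i - κ' * k i)) * k i
      = 2 * K ^ 2 * (u i * k i) - 2 * K * (k i * γ i) + κ' * (k i ^ 2) := by
    intro i; ring
  simp only [e1, e2, e3, Finset.sum_add_distrib, Finset.sum_sub_distrib,
    ← Finset.mul_sum, ← hκ, ← hκ', ← hKdef]
  ring

private lemma star_id (d : ℕ) (k : Fin d → ℝ) (B : Matrix (Fin d) (Fin d) ℂ)
    (hB : Bᵀ = B) (v : Fin d → ℂ) :
    ∑ i, ∑ j, ((v i * (k j : ℂ) + (k i : ℂ) * v j - B i j) *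
      (starRingEnd ℂ) (v i * (k j : ℂ) + (k i : ℂ) * v j - B i j))
    = 2 * (∑ i, ((k i : ℂ)) ^ 2) * (∑ i, v i * (starRingEnd ℂ) (v i))
      + 2 * ((∑ i, v i * (k i : ℂ)) * (∑ i, (starRingEnd ℂ) (v i) * (k i : ℂ)))
      - 2 * (∑ i, v i * (starRingEnd ℂ) (∑ j, B i j * (k j : ℂ)))
      - 2 * (∑ i, (starRingEnd ℂ) (v i) * (∑ j, B i j * (k j : ℂ)))
      + ∑ i, ∑ j, B i j * (starRingEnd ℂ) (B i j) := by
  have hBs : ∀ i j, B j i = B i j := fun i j => (Matrix.IsSymm.apply hB j i).symm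
  have hconjβ : ∀ i, (starRingEnd ℂ) (∑ j, B i j * (k j : ℂ))
      = ∑ j, (starRingEnd ℂ) (B i j) * (k j : ℂ) := by
    intro i
    rw [map_sum]
    exact Finset.sum_congr rfl fun j _ => by
      rw [RingHom.map_mul, Complex.conj_ofReal]
  have expand : ∀ i j, ((v i * (k j : ℂ) + (k i : ℂ) * v j - B i j) *
      (starRingEnd ℂ) (v i * (k j : ℂ) + (k i : ℂ) * v j - B i j))
      = (v i * (starRingEnd ℂ) (v i)) * ((k j : ℂ)) ^ 2
        + (v i * (k i : ℂ)) * ((starRingEnd ℂ) (v j) * (k j : ℂ))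
        + ((starRingEnd ℂ) (v i) * (k i : ℂ)) * (v j * (k j : ℂ))
        + ((k i : ℂ)) ^ 2 * (v j * (starRingEnd ℂ) (v j))
        - v i * ((starRingEnd ℂ) (B i j) * (k j : ℂ))
        - (starRingEnd ℂ) (v i) * (B i j * (k j : ℂ))
        - v j * ((starRingEnd ℂ) (B i j) * (k i : ℂ))
        - (starRingEnd ℂ) (v j) * (B i j * (k i : ℂ))
        + B i j * (starRingEnd ℂ) (B i j) := by
    intro i j
    simp only [map_sub, map_add, RingHom.map_mul, Complex.conj_ofReal]
    ring
  rw [Finset.sum_congr rfl fun i _ => Finset.sum_congr rfl fun j _ => expand i j]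
  simp only [Finset.sum_add_distrib, Finset.sum_sub_distrib, ← Finset.mul_sum,
    ← Finset.sum_mul]
  have h5 : ∑ x, v x * ∑ i, (starRingEnd ℂ) (B x i) * (k i : ℂ)
      = ∑ i, v i * (starRingEnd ℂ) (∑ j, B i j * (k j : ℂ)) :=
    Finset.sum_congr rfl fun i _ => by rw [hconjβ]
  have h7 : ∑ x : Fin d, ∑ x_1 : Fin d, v x_1 * ((starRingEnd ℂ) (B x x_1) * (k x : ℂ))
      = ∑ i, v i * (starRingEnd ℂ) (∑ j, B i j * (k j : ℂ)) := by
    rw [Finset.sum_comm]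
    refine Finset.sum_congr rfl fun i _ => ?_
    rw [hconjβ, Finset.mul_sum]
    exact Finset.sum_congr rfl fun j _ => by rw [hBs]
  have h8 : ∑ x : Fin d, ∑ x_1 : Fin d, (starRingEnd ℂ) (v x_1) * (B x x_1 * (k x : ℂ))
      = ∑ i, (starRingEnd ℂ) (v i) * (∑ j, B i j * (k j : ℂ)) := by
    rw [Finset.sum_comm]
    refine Finset.sum_congr rfl fun i _ => ?_
    rw [Finset.mul_sum]
    exact Finset.sum_congr rfl fun j _ => by rw [hBs]
  rw [h5, h7, h8]
  ring

private lemma key (d : ℕ) (k : Fin d → ℝ) (B : Matrix (Fin d) (Fin d) ℂ)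
    (hB : Bᵀ = B) (v : Fin d → ℂ) :
    4 * (∑ i, ((k i : ℂ)) ^ 2) ^ 4 *
        ∑ i, ∑ j, ((v i * (k j : ℂ) + (k i : ℂ) * v j - B i j) *
          (starRingEnd ℂ) (v i * (k j : ℂ) + (k i : ℂ) * v j - B i j))
    = 4 * (∑ i, ((k i : ℂ)) ^ 2) ^ 4 * (∑ i, ∑ j, B i j * (starRingEnd ℂ) (B i j))
      + (2 * (∑ i, ((k i : ℂ)) ^ 2) *
          (∑ i, (2 * (∑ i, ((k i : ℂ)) ^ 2) ^ 2 * v i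
              - (2 * (∑ i, ((k i : ℂ)) ^ 2) * (∑ j, B i j * (k j : ℂ))
                - (∑ i', (k i' : ℂ) * (∑ j, B i' j * (k j : ℂ))) * (k i : ℂ)))
            * (2 * (∑ i, ((k i : ℂ)) ^ 2) ^ 2 * (starRingEnd ℂ) (v i)
              - (2 * (∑ i, ((k i : ℂ)) ^ 2) * (starRingEnd ℂ) (∑ j, B i j * (k j : ℂ))
                - (∑ i', (k i' : ℂ) * (starRingEnd ℂ) (∑ j, B i' j * (k j : ℂ))) * (k i : ℂ))))
        + 2 * ((∑ i, (2 * (∑ i, ((k i : ℂ)) ^ 2) ^ 2 * v i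
              - (2 * (∑ i, ((k i : ℂ)) ^ 2) * (∑ j, B i j * (k j : ℂ))
                - (∑ i', (k i' : ℂ) * (∑ j, B i' j * (k j : ℂ))) * (k i : ℂ))) * (k i : ℂ))
            * (∑ i, (2 * (∑ i, ((k i : ℂ)) ^ 2) ^ 2 * (starRingEnd ℂ) (v i)
              - (2 * (∑ i, ((k i : ℂ)) ^ 2) * (starRingEnd ℂ) (∑ j, B i j * (k j : ℂ))
                - (∑ i', (k i' : ℂ) * (starRingEnd ℂ) (∑ j, B i' j * (k j : ℂ))) * (k i : ℂ))) * (k i : ℂ))))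
      - 8 * (∑ i, ((k i : ℂ)) ^ 2) ^ 3 *
          (∑ i, (∑ j, B i j * (k j : ℂ)) * (starRingEnd ℂ) (∑ j, B i j * (k j : ℂ)))
      + 4 * (∑ i, ((k i : ℂ)) ^ 2) ^ 2 *
          ((∑ i, (k i : ℂ) * (∑ j, B i j * (k j : ℂ)))
            * (∑ i, (k i : ℂ) * (starRingEnd ℂ) (∑ j, B i j * (k j : ℂ)))) := by
  linear_combination (4 * (∑ i, ((k i : ℂ)) ^ 2) ^ 4) * star_id d k B hB v
    - quadpoly d (fun i => (k i : ℂ)) v (fun i => (starRingEnd ℂ) (v i))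
        (fun i => ∑ j, B i j * (k j : ℂ))
        (fun i => (starRingEnd ℂ) (∑ j, B i j * (k j : ℂ)))

private noncomputable def WW (d : ℕ) (k : Fin d → ℝ) (B : Matrix (Fin d) (Fin d) ℂ)
    (a : Fin d → ℂ) : Fin d → ℂ := fun i =>
  2 * (∑ i', ((k i' : ℂ)) ^ 2) ^ 2 * ((Real.pi : ℂ) * Complex.I * a i)
    - (2 * (∑ i', ((k i' : ℂ)) ^ 2) * (∑ j, B i j * (k j : ℂ))
       - (∑ i', (k i' : ℂ) * (∑ j, B i' j * (k j : ℂ))) * (k i : ℂ))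

private lemma Ea (d : ℕ) (k : Fin d → ℝ) (B : Matrix (Fin d) (Fin d) ℂ)
    (hB : Bᵀ = B) (a : Fin d → ℂ) :
    (∑ i, ∑ j, ‖
        (Real.pi : ℂ) * Complex.I * (a i * (k j : ℂ) + (k i : ℂ) * a j) - B i j‖ ^ 2)
      * (4 * (∑ i, (k i) ^ 2) ^ 4)
    = (∑ i, ∑ j, ‖B i j‖ ^ 2) * (4 * (∑ i, (k i) ^ 2) ^ 4)
      + 2 * (∑ i, (k i) ^ 2) * (∑ i, Complex.normSq (WW d k B a i))
      + 2 * Complex.normSq (∑ i, WW d k B a i * (k i : ℂ))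
      - 8 * (∑ i, (k i) ^ 2) ^ 3 * (∑ i, ‖∑ j, B i j * (k j : ℂ)‖ ^ 2)
      + 4 * (∑ i, (k i) ^ 2) ^ 2
          * ‖∑ i, (k i : ℂ) * (∑ j, B i j * (k j : ℂ))‖ ^ 2 := by
  have KI := key d k B hB (fun i => (Real.pi : ℂ) * Complex.I * a i)
  simp only [map_sum, map_sub, map_add, _root_.map_mul, map_pow, Complex.conj_ofReal,
    Complex.conj_I, map_ofNat] at KI
  have hent : ∀ (i j : Fin d),
      (Real.pi : ℂ) * Complex.I * (a i * (k j : ℂ) + (k i : ℂ) * a j) - B i j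
      = (Real.pi : ℂ) * Complex.I * a i * (k j : ℂ)
        + (k i : ℂ) * ((Real.pi : ℂ) * Complex.I * a j) - B i j := fun i j => by ring
  rw [← Complex.ofReal_inj]
  push_cast [Complex.sq_norm, hent]
  simp only [WW, ← Complex.mul_conj]
  simp only [map_sum, map_sub, map_add, _root_.map_mul, map_pow, Complex.conj_ofReal,
    Complex.conj_I, map_ofNat]
  linear_combination KI

/-- Pointwise-in-Fourier minimization: for nonzero `k ∈ ℝᵈ` and complex symmetric `B`,
the minimum over `a ∈ ℂᵈ` of `‖iπ(a⊗k + k⊗a) − B‖²` equals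
`‖B‖² − 2|Bk|²/|k|² + |k·Bk|²/|k|⁴`, and it is attained. -/
theorem stmt9 (d : ℕ) (k : Fin d → ℝ) (hk : k ≠ 0)
    (B : Matrix (Fin d) (Fin d) ℂ) (hB : Bᵀ = B) :
    let nk2 : ℝ := ∑ i, (k i) ^ 2
    let Bk : Fin d → ℂ := B.mulVec fun i => (k i : ℂ)
    let nBk : ℝ := ∑ i, ‖Bk i‖ ^ 2
    let kBk : ℂ := ∑ i, (k i : ℂ) * Bk i
    let frobB : ℝ := ∑ i, ∑ j, ‖B i j‖ ^ 2
    IsLeast {e : ℝ | ∃ a : Fin d → ℂ,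
        e = ∑ i, ∑ j, ‖
          (Real.pi : ℂ) * Complex.I * (a i * (k j : ℂ) + (k i : ℂ) * a j) - B i j‖ ^ 2}
      (frobB - 2 * nBk / nk2 + ‖kBk‖ ^ 2 / nk2 ^ 2) := by
  intro nk2 Bk nBk kBk frobB
  have hnBk : nBk = ∑ i, ‖∑ j, B i j * (k j : ℂ)‖ ^ 2 := rfl
  have hkBk : kBk = ∑ i, (k i : ℂ) * (∑ j, B i j * (k j : ℂ)) := rfl
  have hnk2 : nk2 = ∑ i, (k i) ^ 2 := rfl
  have hfrobB : frobB = ∑ i, ∑ j, ‖B i j‖ ^ 2 := rfl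
  -- positivity of nk2
  have hS : 0 < ∑ i, (k i) ^ 2 := by
    obtain ⟨i0, hi0⟩ := Function.ne_iff.mp hk
    exact Finset.sum_pos' (fun i _ => sq_nonneg _)
      ⟨i0, Finset.mem_univ _, by
        have h0 : k i0 ≠ 0 := by simpa using hi0
        exact lt_of_le_of_ne (sq_nonneg _) (Ne.symm (pow_ne_zero 2 h0))⟩
  have hSne : (∑ i, (k i) ^ 2) ≠ 0 := ne_of_gt hS
  have hC : (0:ℝ) < 4 * (∑ i, (k i) ^ 2) ^ 4 := by positivity
  set S := ∑ i, (k i) ^ 2 with hSdef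
  set N := ∑ i, ‖∑ j, B i j * (k j : ℂ)‖ ^ 2 with hNdef
  set A := ‖∑ i, (k i : ℂ) * (∑ j, B i j * (k j : ℂ))‖ ^ 2 with hAdef
  set F := ∑ i, ∑ j, ‖B i j‖ ^ 2 with hFdef
  have hVC : (F - 2 * N / S + A / S ^ 2) * (4 * S ^ 4)
      = F * (4 * S ^ 4) - 8 * S ^ 3 * N + 4 * S ^ 2 * A := by
    field_simp
    ring
  rw [hnk2, hnBk, hfrobB, hkBk, ← hAdef]
  constructor
  · -- membership : attained
    have hKcne : (∑ i, ((k i : ℂ)) ^ 2) ≠ 0 := by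
      intro h
      apply hSne
      have : ((S : ℝ) : ℂ) = 0 := by rw [hSdef]; push_cast; exact h
      exact_mod_cast this
    have hden : (2 * (∑ i, ((k i : ℂ)) ^ 2) ^ 2 * ((Real.pi : ℂ) * Complex.I)) ≠ 0 := by
      apply mul_ne_zero
      apply mul_ne_zero two_ne_zero (pow_ne_zero _ hKcne)
      exact mul_ne_zero (Complex.ofReal_ne_zero.mpr Real.pi_ne_zero) Complex.I_ne_zero
    refine ⟨fun i => (2 * (∑ i', ((k i' : ℂ)) ^ 2) * (∑ j, B i j * (k j : ℂ))
        - (∑ i', (k i' : ℂ) * (∑ j, B i' j * (k j : ℂ))) * (k i : ℂ))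
        * (2 * (∑ i', ((k i' : ℂ)) ^ 2) ^ 2 * ((Real.pi : ℂ) * Complex.I))⁻¹, ?_⟩
    have h := Ea d k B hB (fun i => (2 * (∑ i', ((k i' : ℂ)) ^ 2) * (∑ j, B i j * (k j : ℂ))
        - (∑ i', (k i' : ℂ) * (∑ j, B i' j * (k j : ℂ))) * (k i : ℂ))
        * (2 * (∑ i', ((k i' : ℂ)) ^ 2) ^ 2 * ((Real.pi : ℂ) * Complex.I))⁻¹)
    have hW0 : ∀ i, WW d k B (fun i => (2 * (∑ i', ((k i' : ℂ)) ^ 2) * (∑ j, B i j * (k j : ℂ))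
        - (∑ i', (k i' : ℂ) * (∑ j, B i' j * (k j : ℂ))) * (k i : ℂ))
        * (2 * (∑ i', ((k i' : ℂ)) ^ 2) ^ 2 * ((Real.pi : ℂ) * Complex.I))⁻¹) i = 0 := by
      intro i
      simp only [WW]
      field_simp
      ring
    simp only [hW0, Complex.normSq_zero, zero_mul, Finset.sum_const_zero, mul_zero,
      add_zero] at h
    rw [← hSdef, ← hNdef, ← hAdef, ← hFdef] at h
    exact (mul_right_cancel₀ (ne_of_gt hC) (by rw [hVC]; linarith [h])).symm
  · -- lower bound
    rintro e ⟨a, rfl⟩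
    have h := Ea d k B hB a
    rw [← hSdef, ← hNdef, ← hAdef, ← hFdef] at h
    refine le_of_mul_le_mul_right ?_ hC
    rw [hVC]
    have h1 : (0:ℝ) ≤ ∑ i, Complex.normSq (WW d k B a i) :=
      Finset.sum_nonneg fun i _ => Complex.normSq_nonneg _
    have h2 : (0:ℝ) ≤ Complex.normSq (∑ i, WW d k B a i * (k i : ℂ)) :=
      Complex.normSq_nonneg _
    nlinarith [h, h1, h2, hS.le]
end

section
/- Let g : 𝕋² → ℝ be measurable taking only finitely many values (finite range). Then for all 1 ≤ p ≤ q < ∞ and every translation vector z ∈ 𝕋², the difference Δ_z g(x) := g(x+z) − g(x) satisfies ‖Δ_z g‖_{L^q}^q ≤ C ‖Δ_z g‖_{L^p}^p, where C depends only on the (finite) range of g and on p,q. In particular, if g ∈ B^{1/3}_{p,r} for some p, then g ∈ B^{1/3}_{q,r} for every q ≥ p. -/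
open MeasureTheory

noncomputable section

/-- The unit cube `[0,1)²`, a fundamental domain for `𝕋²`. -/
def Q : Set (ℝ × ℝ) := Set.Ico (0:ℝ) 1 ×ˢ Set.Ico (0:ℝ) 1

/-- For a finite-range periodic `g : 𝕋² → ℝ` and any `1 ≤ p ≤ q < ∞` there is a constant `C`
(depending only on the range of `g` and on `p, q`) with
`‖Δ_z g‖_{L^q}^q ≤ C ‖Δ_z g‖_{L^p}^p` for every translation `z`. -/
theorem stmt13 (g : ℝ × ℝ → ℝ) (hmeas : Measurable g)
    (hper : ∀ x : ℝ × ℝ, g (x.1 + 1, x.2) = g x ∧ g (x.1, x.2 + 1) = g x)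
    (hfin : (Set.range g).Finite) :
    ∀ p q : ℝ, 1 ≤ p → p ≤ q → ∃ C > 0, ∀ z : ℝ × ℝ,
      (∫ x in Q, |g (x.1 + z.1, x.2 + z.2) - g x| ^ q) ≤
        C * ∫ x in Q, |g (x.1 + z.1, x.2 + z.2) - g x| ^ p := by
  intro p q hp hpq
  have hq1 : (1:ℝ) ≤ q := hp.trans hpq
  have hp0 : (0:ℝ) < p := lt_of_lt_of_le one_pos hp
  have hq0 : (0:ℝ) < q := lt_of_lt_of_le one_pos hq1
  -- the finite set of possible values of |Δ_z g|
  set F : Set ℝ := (fun ab : ℝ × ℝ => |ab.1 - ab.2|) '' (Set.range g ×ˢ Set.range g) with hFdef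
  have hF : F.Finite := (hfin.prod hfin).image _
  -- a bound C for the ratios a^q / a^p over F
  obtain ⟨C', hC'⟩ := (hF.image (fun a => a ^ q / a ^ p)).bddAbove
  set C : ℝ := max C' 1 with hCdef
  have hCpos : (0:ℝ) < C := lt_of_lt_of_le one_pos (le_max_right _ _)
  -- pointwise inequality on F
  have key : ∀ a ∈ F, a ^ q ≤ C * a ^ p := by
    intro a haF
    have ha0 : 0 ≤ a := by
      obtain ⟨ab, _, rfl⟩ := haF
      exact abs_nonneg _
    rcases eq_or_lt_of_le ha0 with h | h
    · rw [← h, Real.zero_rpow hq0.ne', Real.zero_rpow hp0.ne', mul_zero]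
    · have hap : 0 < a ^ p := Real.rpow_pos_of_pos h p
      have hmem : a ^ q / a ^ p ∈ (fun a => a ^ q / a ^ p) '' F := ⟨a, haF, rfl⟩
      have hle : a ^ q / a ^ p ≤ C := (hC' hmem).trans (le_max_left _ _)
      calc a ^ q = a ^ q / a ^ p * a ^ p := by field_simp
        _ ≤ C * a ^ p := mul_le_mul_of_nonneg_right hle hap.le
  -- a global bound for |g|
  obtain ⟨M, hM⟩ := (hfin.image abs).bddAbove
  have hMg : ∀ x, |g x| ≤ M := fun x => hM ⟨g x, ⟨x, rfl⟩, rfl⟩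
  have hM0 : 0 ≤ M := (abs_nonneg _).trans (hMg (0, 0))
  refine ⟨C, hCpos, fun z => ?_⟩
  set Δ : ℝ × ℝ → ℝ := fun x => |g (x.1 + z.1, x.2 + z.2) - g x| with hΔdef
  have hΔmem : ∀ x, Δ x ∈ F := fun x =>
    ⟨(g (x.1 + z.1, x.2 + z.2), g x), ⟨⟨_, rfl⟩, ⟨_, rfl⟩⟩, rfl⟩
  have hΔ0 : ∀ x, 0 ≤ Δ x := fun x => abs_nonneg _
  have hΔbdd : ∀ x, Δ x ≤ 2 * M := fun x => by
    calc Δ x ≤ |g (x.1 + z.1, x.2 + z.2)| + |g x| := abs_sub _ _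
      _ ≤ M + M := add_le_add (hMg _) (hMg _)
      _ = 2 * M := (two_mul M).symm
  have hΔmeas : Measurable Δ := by
    apply Measurable.abs
    exact (hmeas.comp ((measurable_fst.add_const z.1).prodMk
      (measurable_snd.add_const z.2))).sub hmeas
  -- Q has finite measure
  have hQfin : volume Q ≠ ⊤ := by
    have hsub : Q ⊆ Set.Icc ((0:ℝ), (0:ℝ)) (1, 1) := by
      rw [Set.Icc_prod_eq]
      exact Set.prod_mono Set.Ico_subset_Icc_self Set.Ico_subset_Icc_self
    exact ((measure_mono hsub).trans_lt isCompact_Icc.measure_lt_top).ne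
  -- integrability of Δ^r for any 0 ≤ r
  have hInt : ∀ r : ℝ, 0 < r → IntegrableOn (fun x => Δ x ^ r) Q volume := by
    intro r hr
    apply Measure.integrableOn_of_bounded hQfin
      (((Real.continuous_rpow_const hr.le).measurable.comp hΔmeas).aestronglyMeasurable) (M := (2 * M + 1) ^ r)
    filter_upwards with x
    show |Δ x ^ r| ≤ (2 * M + 1) ^ r
    rw [abs_of_nonneg (Real.rpow_nonneg (hΔ0 x) r)]
    exact Real.rpow_le_rpow (hΔ0 x) ((hΔbdd x).trans (by linarith)) hr.le
  calc (∫ x in Q, Δ x ^ q) ≤ ∫ x in Q, C * Δ x ^ p := by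
        apply integral_mono (hInt q hq0) ((hInt p hp0).const_mul C)
        exact fun x => key (Δ x) (hΔmem x)
    _ = C * ∫ x in Q, Δ x ^ p := integral_const_mul C _
end
end
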